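/- For any point P lying on the unit circle, the largest of the three distances |P - A₀|, |P - B₀|, |P - C₀| equals the sum of the other two (van Schooten's theorem). -/

import Mathlib

open Complex

noncomputable def A0 : ℂ := Complex.I
noncomputable def B0 : ℂ := -Complex.exp ((Real.pi : ℂ) * Complex.I / 6)
noncomputable def C0 : ℂ := Complex.exp (-((Real.pi : ℂ) * Complex.I) / 6)

lemma abs_key (x y : ℝ) : |x + y| = |x| + |y| ∨ |x| = |y| + |x + y| ∨ |y| = |x| + |x + y| := by
  rcases abs_cases x with ⟨hx, hx'⟩ | ⟨hx, hx'⟩ <;>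
  rcases abs_cases y with ⟨hy, hy'⟩ | ⟨hy, hy'⟩ <;>
  rcases abs_cases (x + y) with ⟨h, h'⟩ | ⟨h, h'⟩ <;>
    first
      | (left; linarith)
      | (right; left; linarith)
      | (right; right; linarith)

lemma chord (θ α : ℝ) :
    ‖Complex.exp (θ * I) - Complex.exp (α * I)‖ = 2 * |Real.sin ((θ - α) / 2)| := by
  set s : ℝ := (θ + α) / 2
  set d : ℝ := (θ - α) / 2
  have hsin : Complex.exp ((d : ℂ) * I) - Complex.exp (-((d : ℂ) * I)) =
      2 * I * Complex.sin (d : ℂ) := by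
    rw [show -((d : ℂ) * I) = ((-d : ℝ) : ℂ) * I by push_cast; ring, Complex.exp_mul_I,
      Complex.exp_mul_I, Complex.ofReal_neg, Complex.cos_neg, Complex.sin_neg]
    ring
  have e : Complex.exp ((θ : ℂ) * I) - Complex.exp ((α : ℂ) * I) =
      Complex.exp ((s : ℂ) * I) * (Complex.exp ((d : ℂ) * I) - Complex.exp (-((d : ℂ) * I))) := by
    rw [mul_sub, ← Complex.exp_add, ← Complex.exp_add]
    congr 2 <;> push_cast [s, d] <;> ring
  rw [e, hsin, norm_mul, Complex.norm_exp_ofReal_mul_I, one_mul, norm_mul, norm_mul,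
    ← Complex.ofReal_sin, Complex.norm_real, Complex.norm_two, Complex.norm_I, mul_one, Real.norm_eq_abs]

/-- van Schooten's theorem: for P on the unit circle, the largest of the three distances
equals the sum of the other two. -/
theorem stmt_1 (P : ℂ) (hP : ‖P‖ = 1) :
    ‖P - A0‖ = ‖P - B0‖ + ‖P - C0‖ ∨
    ‖P - B0‖ = ‖P - C0‖ + ‖P - A0‖ ∨
    ‖P - C0‖ = ‖P - A0‖ + ‖P - B0‖ := by
  obtain ⟨θ, rfl⟩ := (Complex.norm_eq_one_iff P).mp hP
  have hA : A0 = Complex.exp ((((Real.pi / 2 : ℝ)) : ℂ) * I) := by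
    rw [A0]
    rw [Complex.exp_mul_I, ← Complex.ofReal_cos, ← Complex.ofReal_sin, Real.cos_pi_div_two,
      Real.sin_pi_div_two]
    simp
  have hB : B0 = Complex.exp ((((7 * Real.pi / 6 : ℝ)) : ℂ) * I) := by
    rw [B0, show ((((7 * Real.pi / 6 : ℝ)) : ℂ) * I) = (Real.pi : ℂ) * I + (Real.pi : ℂ) * I / 6 by
      push_cast; ring, Complex.exp_add, Complex.exp_pi_mul_I]
    ring
  have hC : C0 = Complex.exp ((((-Real.pi / 6 : ℝ)) : ℂ) * I) := by
    rw [C0, show ((((-Real.pi / 6 : ℝ)) : ℂ) * I) = -((Real.pi : ℂ) * I) / 6 by push_cast; ring]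
  rw [hA, hB, hC, chord, chord, chord]
  set x := Real.sin ((θ - 7 * Real.pi / 6) / 2) with hx
  set y := Real.sin ((θ - -Real.pi / 6) / 2) with hy
  have hsum : Real.sin ((θ - Real.pi / 2) / 2) = x + y := by
    rw [hx, hy,
      show (θ - 7 * Real.pi / 6) / 2 = (θ - Real.pi / 2) / 2 - Real.pi / 3 by ring,
      show (θ - -Real.pi / 6) / 2 = (θ - Real.pi / 2) / 2 + Real.pi / 3 by ring,
      Real.sin_sub, Real.sin_add, Real.cos_pi_div_three]
    ring
  rw [hsum]
  rcases abs_key x y with h | h | h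
  · left; rw [h]; ring
  · right; left; rw [h]; ring
  · right; right; rw [h]; ring
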